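/- Let a, b ≥ 2 be coprime natural numbers and let i ≥ 1. Then for every natural number k ≥ 1 one has ℓ(a,b,a·k) < i if and only if k ≤ b·i; in particular {k ≥ 1 : ℓ(a,b,a·k) < i} = {1, 2, …, b·i} and ∏_{ℓ(a,b,a·k) < i} k = (b·i)!. -/

import Mathlib

/-- `ell a b m` is the number of pairs `(i, j)` of positive integers with `m = a * i + b * j`. -/
noncomputable def ell (a b m : ℕ) : ℕ :=
  {p : ℕ × ℕ | 0 < p.1 ∧ 0 < p.2 ∧ m = a * p.1 + b * p.2}.ncard

lemma ell_mul_eq (a b k : ℕ) (ha : 0 < a) (hb : 0 < b) (hab : Nat.gcd a b = 1) :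
    ell a b (a * k) = (k - 1) / b := by
  have hset : {p : ℕ × ℕ | 0 < p.1 ∧ 0 < p.2 ∧ a * k = a * p.1 + b * p.2} =
      ↑((Finset.Icc 1 ((k - 1) / b)).image (fun t => (k - b * t, a * t))) := by
    ext ⟨x, y⟩
    simp only [Set.mem_setOf_eq, Finset.coe_image, Set.mem_image, Finset.mem_coe,
      Finset.mem_Icc, Prod.mk.injEq]
    constructor
    · rintro ⟨hx, hy, heq⟩
      have h1 : a ∣ a * k - a * x := Nat.dvd_sub (Dvd.intro k rfl) (Dvd.intro x rfl)
      have h2 : b * y = a * k - a * x := by omega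
      have hdvd : a ∣ b * y := h2 ▸ h1
      have hay : a ∣ y := Nat.Coprime.dvd_of_dvd_mul_left hab hdvd
      obtain ⟨t, rfl⟩ := hay
      have ht1 : 1 ≤ t := by
        rcases Nat.eq_zero_or_pos t with h | h
        · subst h; simp at hy
        · exact h
      have hk : k = x + b * t := by
        have h3 : a * k = a * (x + b * t) := by rw [heq]; ring
        exact Nat.eq_of_mul_eq_mul_left ha h3
      have ht2 : t ≤ (k - 1) / b := by
        rw [Nat.le_div_iff_mul_le hb, mul_comm]; omega
      exact ⟨t, ⟨ht1, ht2⟩, by omega, rfl⟩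
    · rintro ⟨t, ⟨ht1, ht2⟩, hx, hy⟩
      have hbt : b * t ≤ k - 1 := by
        have h := (Nat.le_div_iff_mul_le hb).mp ht2
        rw [mul_comm] at h; exact h
      subst hy; subst hx
      have hm : 0 < b * t := Nat.mul_pos (by omega) (by omega)
      refine ⟨by omega, by positivity, ?_⟩
      have hle : b * t ≤ k := by omega
      calc a * k = a * (k - b * t) + a * (b * t) := by
            rw [← Nat.mul_add]; congr 1; omega
        _ = a * (k - b * t) + b * (a * t) := by ring_nf
  rw [ell, hset, Set.ncard_coe_finset, Finset.card_image_of_injective, Nat.card_Icc]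
  · simp
  · intro s t h
    have := (Prod.mk.injEq _ _ _ _).mp h
    exact Nat.eq_of_mul_eq_mul_left ha this.2

theorem ell_a_mul_lt_iff (a b : ℕ) (ha : 2 ≤ a) (hb : 2 ≤ b)
    (hab : Nat.gcd a b = 1) (i : ℕ) (hi : 1 ≤ i) :
    (∀ k : ℕ, 1 ≤ k → (ell a b (a * k) < i ↔ k ≤ b * i)) ∧
      {k : ℕ | 1 ≤ k ∧ ell a b (a * k) < i} = Set.Icc 1 (b * i) ∧
      ∏ k ∈ Finset.Icc 1 (b * i), k = Nat.factorial (b * i) := by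
  have hb0 : 0 < b := by omega
  have key : ∀ k : ℕ, 1 ≤ k → (ell a b (a * k) < i ↔ k ≤ b * i) := by
    intro k hk
    rw [ell_mul_eq a b k (by omega) hb0 hab, Nat.div_lt_iff_lt_mul hb0, mul_comm i b]
    omega
  refine ⟨key, ?_, ?_⟩
  · ext k
    simp only [Set.mem_setOf_eq, Set.mem_Icc]
    constructor
    · rintro ⟨h1, h2⟩; exact ⟨h1, (key k h1).mp h2⟩
    · rintro ⟨h1, h2⟩; exact ⟨h1, (key k h1).mpr h2⟩
  · rw [← Finset.Ico_add_one_right_eq_Icc]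
    exact Finset.prod_Ico_id_eq_factorial (b * i)
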